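/- An ideal α of a commutative ring A is strongly n-absorbing if and only if for every list of n+1 finitely generated ideals γ₁,...,γ_{n+1} of A with γ₁⋯γ_{n+1} ⊆ α, there exists j such that ∏_{i≠j} γ_i ⊆ α. -/

import Mathlib

def IsStronglyAbsorbing {A : Type*} [CommRing A] (α : Ideal A) (n : ℕ) : Prop :=
  ∀ γ : Fin (n + 1) → Ideal A, (∏ i, γ i) ≤ α →
    ∃ j, (∏ i ∈ Finset.univ.erase j, γ i) ≤ α

lemma prod_mono_aux {A : Type*} [CommRing A] {ι : Type*} (s : Finset ι)
    {δ δ' : ι → Ideal A} (h : ∀ i, δ i ≤ δ' i) :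
    (∏ i ∈ s, δ i) ≤ ∏ i ∈ s, δ' i := by
  classical
  induction s using Finset.induction_on with
  | empty => simp
  | insert _ _ ha ih =>
    rw [Finset.prod_insert ha, Finset.prod_insert ha]
    exact Ideal.mul_mono (h _) ih

lemma exists_fg_subideal {A : Type*} [CommRing A] {ι : Type*} [DecidableEq ι]
    (s : Finset ι) (γ : ι → Ideal A) {t : A} (ht : t ∈ ∏ i ∈ s, γ i) :
    ∃ δ : ι → Ideal A, (∀ i, (δ i).FG) ∧ (∀ i, δ i ≤ γ i) ∧ t ∈ ∏ i ∈ s, δ i := by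
  induction s using Finset.induction_on generalizing t with
  | empty =>
    exact ⟨fun _ => ⊥, fun _ => Submodule.fg_bot, fun _ => bot_le, by simp⟩
  | @insert a s ha ih =>
    rw [Finset.prod_insert ha] at ht
    refine Submodule.mul_induction_on ht ?_ ?_
    · intro x hx y hy
      obtain ⟨δ, hfg, hle, hmem⟩ := ih hy
      refine ⟨Function.update δ a (Ideal.span {x}), ?_, ?_, ?_⟩
      · intro i
        rcases eq_or_ne i a with rfl | h
        · rw [Function.update_self]; exact Submodule.fg_span (Set.finite_singleton x)
        · simpa [Function.update_of_ne h] using hfg i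
      · intro i
        rcases eq_or_ne i a with rfl | h
        · simpa using (Ideal.span_singleton_le_iff_mem _).mpr hx
        · simpa [Function.update_of_ne h] using hle i
      · rw [Finset.prod_insert ha, Function.update_self]
        have : (∏ i ∈ s, Function.update δ a (Ideal.span {x}) i) = ∏ i ∈ s, δ i := by
          apply Finset.prod_congr rfl
          intro i hi
          exact Function.update_of_ne (by rintro rfl; exact ha hi) _ _
        rw [this]
        exact Submodule.mul_mem_mul (Ideal.mem_span_singleton_self x) hmem
    · rintro t₁ t₂ ⟨δ₁, hfg₁, hle₁, hm₁⟩ ⟨δ₂, hfg₂, hle₂, hm₂⟩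
      refine ⟨fun i => δ₁ i ⊔ δ₂ i, fun i => Submodule.FG.sup (hfg₁ i) (hfg₂ i),
        fun i => sup_le (hle₁ i) (hle₂ i), ?_⟩
      exact Submodule.add_mem _
        (prod_mono_aux _ (fun i => (le_sup_left : δ₁ i ≤ _)) hm₁)
        (prod_mono_aux _ (fun i => (le_sup_right : δ₂ i ≤ _)) hm₂)

theorem stronglyAbsorbing_iff_fg {A : Type*} [CommRing A] (α : Ideal A) (n : ℕ) :
    IsStronglyAbsorbing α n ↔
      ∀ γ : Fin (n + 1) → Ideal A, (∀ i, (γ i).FG) → (∏ i, γ i) ≤ α →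
        ∃ j, (∏ i ∈ Finset.univ.erase j, γ i) ≤ α := by
  constructor
  · intro h γ _ hp
    exact h γ hp
  · intro h γ hp
    by_contra hc
    push_neg at hc
    have hwit : ∀ j : Fin (n + 1), ∃ t, t ∈ (∏ i ∈ Finset.univ.erase j, γ i) ∧ t ∉ α := by
      intro j
      obtain ⟨t, ht, hta⟩ := SetLike.not_le_iff_exists.mp (hc j)
      exact ⟨t, ht, hta⟩
    choose t htmem htα using hwit
    have hδ : ∀ j : Fin (n + 1), ∃ δ : Fin (n + 1) → Ideal A,
        (∀ i, (δ i).FG) ∧ (∀ i, δ i ≤ γ i) ∧ t j ∈ ∏ i ∈ Finset.univ.erase j, δ i :=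
      fun j => exists_fg_subideal _ γ (htmem j)
    choose δ hδfg hδle hδmem using hδ
    set Δ : Fin (n + 1) → Ideal A := fun i => Finset.univ.sup (fun j => δ j i) with hΔ
    have hΔfg : ∀ i, (Δ i).FG := by
      intro i
      apply Submodule.fg_finset_sup
      intro j _
      exact hδfg j i
    have hΔle : ∀ i, Δ i ≤ γ i := by
      intro i
      exact Finset.sup_le fun j _ => hδle j i
    obtain ⟨j, hj⟩ := h Δ hΔfg (le_trans (prod_mono_aux _ hΔle) hp)
    exact htα j (hj (prod_mono_aux _ (fun i => Finset.le_sup (f := fun j => δ j i) (Finset.mem_univ j)) (hδmem j)))
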